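/- If G is a simple graph, e is an edge of G with endpoint x, chi(G) = k+1 and chi(G - e) = k, and 3 <= r <= k, then G - e contains at least (1/2) * prod_{i=1}^{r-1} (k - i) cycles of length congruent to 0 mod r. -/

import Mathlib

open SimpleGraph
open scoped Classical

/-- `H` is a cycle subgraph of `G`: its vertices and edges are those of some cycle walk. -/
def IsCycleSubgraph {V : Type*} (G : SimpleGraph V) (H : G.Subgraph) : Prop :=
  ∃ (v : V) (w : G.Walk v v), w.IsCycle ∧
    H.verts = {x | x ∈ w.support} ∧ H.edgeSet = {e | e ∈ w.edges}

/-- The set of cycle subgraphs of `G` whose length (number of edges) is `m` mod `r`. -/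
def modCycles {V : Type*} (G : SimpleGraph V) (r m : ℕ) : Set G.Subgraph :=
  {H | IsCycleSubgraph G H ∧ H.edgeSet.ncard % r = m}

/-- `G` is `k`-critical: `χ(G) = k` and every proper subgraph is `(k-1)`-colorable. -/
def IsCritical {V : Type*} [Fintype V] (G : SimpleGraph V) (k : ℕ) : Prop :=
  G.chromaticNumber = (k : ℕ∞) ∧
    ∀ H : G.Subgraph, H ≠ ⊤ → H.coe.Colorable (k - 1)

section auxiliary

variable {V : Type*}

lemma exists_dup_decomp {α : Type*} {L : List α} (h : ¬ L.Nodup) :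
    ∃ (a : α) (l₁ l₂ l₃ : List α), L = l₁ ++ a :: l₂ ++ a :: l₃ := by
  induction L with
  | nil => simp at h
  | cons b L ih =>
    by_cases hb : b ∈ L
    · obtain ⟨s, t, rfl⟩ := List.append_of_mem hb
      exact ⟨b, [], s, t, by simp⟩
    · have hL : ¬ L.Nodup := fun hn => h (List.nodup_cons.2 ⟨hb, hn⟩)
      obtain ⟨a, l₁, l₂, l₃, rfl⟩ := ih hL
      exact ⟨a, b :: l₁, l₂, l₃, by simp⟩

lemma closed_chain_simple {α : Type*} (D : α → α → Prop) :
    ∀ (N : ℕ) (u : α) (l : List α), l.length ≤ N → l ≠ [] → List.Chain D u l →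
      l.getLast? = some u →
      ∃ (u' : α) (l' : List α), l' ≠ [] ∧ List.Chain D u' l' ∧ l'.getLast? = some u' ∧
        (u' :: l'.dropLast).Nodup := by
  intro N
  induction N with
  | zero =>
    intro u l hl hne
    cases l with
    | nil => exact absurd rfl hne
    | cons a l => simp at hl
  | succ N ih =>
    intro u l hl hne hc hlast
    by_cases hnd : (u :: l.dropLast).Nodup
    · exact ⟨u, l, hne, hc, hlast, hnd⟩
    obtain ⟨a, l₁, l₂, l₃, hdec⟩ := exists_dup_decomp hnd
    have hgl : l.getLast hne = u := by
      rw [List.getLast?_eq_getLast hne] at hlast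
      exact Option.some_injective _ hlast
    have hl' : l = l.dropLast ++ [u] := by
      conv_lhs => rw [← List.dropLast_append_getLast hne, hgl]
    cases l₁ with
    | nil =>
      rw [List.nil_append] at hdec
      obtain ⟨hau, hdrop⟩ := List.cons.inj hdec
      subst hau
      have hform : l = l₂ ++ u :: (l₃ ++ [u]) := by
        rw [hl', hdrop]; simp
      rw [hform] at hc
      have hc2 : List.Chain D u (l₂ ++ [u]) := (List.isChain_cons_split.1 hc).1
      have hlen : (l₂ ++ [u]).length ≤ N := by
        have := hl
        rw [hform] at this
        simp at this ⊢
        omega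
      exact ih u (l₂ ++ [u]) hlen (by simp) hc2 (by simp)
    | cons b l₁' =>
      rw [List.cons_append] at hdec
      obtain ⟨hbu, hdrop⟩ := List.cons.inj hdec
      have hform : l = l₁' ++ a :: (l₂ ++ a :: (l₃ ++ [u])) := by
        rw [hl', hdrop]; simp
      rw [hform] at hc
      have hc1 : List.Chain D a (l₂ ++ a :: (l₃ ++ [u])) := (List.isChain_cons_split.1 hc).2
      have hc2 : List.Chain D a (l₂ ++ [a]) := (List.isChain_cons_split.1 hc1).1
      have hlen : (l₂ ++ [a]).length ≤ N := by
        have := hl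
        rw [hform] at this
        simp at this ⊢
        omega
      exact ih a (l₂ ++ [a]) hlen (by simp) hc2 (by simp)

lemma cons_getElem_length {α : Type*} :
    ∀ (l : List α) (h : l ≠ []) (a : α), (a :: l)[l.length]'(by simp) = l.getLast h := by
  intro l
  induction l with
  | nil => intro h; exact absurd rfl h
  | cons b l' ih =>
    intro h a
    cases l' with
    | nil => simp
    | cons cc l'' =>
      have hh := ih (by simp) b
      simp only [List.length_cons] at hh ⊢
      rw [List.getElem_cons_succ, hh]
      exact (List.getLast_cons (by simp)).symm


lemma walk_of_chain (G' : SimpleGraph V) (D : V → V → Prop)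
    (hD : ∀ a b, D a b → G'.Adj a b) :
    ∀ (l : List V) (u v : V), List.Chain D u l →
      (u :: l).getLast (List.cons_ne_nil _ _) = v →
      ∃ w : G'.Walk u v, w.support = u :: l ∧
        (∀ e ∈ w.edges, ∃ a b, e = s(a, b) ∧ D a b) ∧
        (∀ n (h : n + 1 < (u :: l).length),
          s((u :: l)[n]'(by omega), (u :: l)[n + 1]'h) ∈ w.edges) := by
  intro l
  induction l with
  | nil =>
    intro u v _ hv
    simp only [List.getLast_singleton] at hv
    subst hv
    exact ⟨Walk.nil, by simp, by simp, by intro n h; simp at h⟩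
  | cons a l ih =>
    intro u v hc hv
    have hc : List.IsChain D (u :: a :: l) := hc
    rw [List.chain_cons] at hc
    obtain ⟨hua, hcl⟩ := hc
    rw [List.getLast_cons_cons] at hv
    obtain ⟨w', hs', he', hidx'⟩ := ih a v hcl hv
    refine ⟨Walk.cons (hD u a hua) w', by simp [hs'], ?_, ?_⟩
    · intro e hee
      rw [Walk.edges_cons, List.mem_cons] at hee
      rcases hee with rfl | hee
      · exact ⟨u, a, rfl, hua⟩
      · exact he' e hee
    · intro n h
      cases n with
      | zero =>
        simp [Walk.edges_cons]
      | succ m =>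
        have h' : m + 1 < (a :: l).length := by simpa using h
        have := hidx' m h'
        simp only [List.getElem_cons_succ]
        rw [Walk.edges_cons]
        exact List.mem_cons_of_mem _ this

lemma chain_phases {k r : ℕ} (D : V → V → Prop) (q : ZMod r → Fin k) (c : V → Fin k)
    (hstep : ∀ a b, D a b → ∃ i, c a = q i ∧ c b = q (i + 1))
    (hq : Function.Injective q) :
    ∀ (l : List V) (u : V) (i : ZMod r), List.Chain D u l → c u = q i →
      ∀ n (h : n < (u :: l).length), c ((u :: l)[n]'h) = q (i + n) := by
  intro l
  induction l with
  | nil =>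
    intro u i _ hu n h
    simp only [List.length_cons, List.length_nil] at h
    interval_cases n
    · simpa using hu
  | cons a l ih =>
    intro u i hc hu n h
    have hc : List.IsChain D (u :: a :: l) := hc
    rw [List.chain_cons] at hc
    obtain ⟨hua, hcl⟩ := hc
    obtain ⟨j, hju, hja⟩ := hstep u a hua
    have hij : j = i := hq (hju.symm.trans hu)
    subst hij
    cases n with
    | zero => simpa using hu
    | succ m =>
      have h' : m < (a :: l).length := by simpa using h
      have := ih a (j + 1) hcl hja m h'
      simp only [List.getElem_cons_succ]
      rw [this]
      congr 1
      push_cast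
      ring

lemma edge_loop_length_one {G' : SimpleGraph V} :
    ∀ {a u : V} (p : G'.Walk a u), p.support.Nodup → s(u, a) ∈ p.edges → p.length = 1 := by
  intro a u p
  induction p with
  | nil => simp
  | @cons a b u hab p ih =>
    intro hnd hmem
    rw [Walk.edges_cons, List.mem_cons] at hmem
    rw [Walk.support_cons, List.nodup_cons] at hnd
    rcases hmem with heq | hmem
    · rw [Sym2.eq_iff] at heq
      rcases heq with ⟨hu, hb⟩ | ⟨hu, hb⟩
      · exact absurd (hb ▸ hab) G'.irrefl
      · subst hu
        cases p with
        | nil => simp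
        | cons h2 p2 =>
          exfalso
          rw [Walk.support_cons] at hnd
          exact (List.nodup_cons.1 hnd.2).1 (Walk.end_mem_support p2)
    · exfalso
      exact hnd.1 (Walk.snd_mem_support_of_mem_edges p hmem)

lemma forced_eq {k : ℕ} (G : SimpleGraph V) (x y : V) (hxy : G.Adj x y)
    (hnc : ¬ G.Colorable k) (c : (G.deleteEdges {s(x, y)}).Coloring (Fin k)) :
    c x = c y := by
  by_contra hne
  apply hnc
  refine ⟨Coloring.mk c ?_⟩
  intro a b hab
  by_cases hee : s(a, b) = s(x, y)
  · rw [Sym2.eq_iff] at hee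
    rcases hee with ⟨rfl, rfl⟩ | ⟨rfl, rfl⟩
    · exact hne
    · exact fun h => hne h.symm
  · have : (G.deleteEdges {s(x, y)}).Adj a b := by
      rw [deleteEdges_adj]
      exact ⟨hab, by simpa using hee⟩
    exact c.valid this

lemma reach_of_pattern {k r : ℕ} [NeZero r] (hr3 : 3 ≤ r) (G : SimpleGraph V) (x y : V)
    (hxy : G.Adj x y) (hnc : ¬ G.Colorable k)
    (c : (G.deleteEdges {s(x, y)}).Coloring (Fin k))
    (q : ZMod r → Fin k) (hq : Function.Injective q) (hq0 : q 0 = c x) :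
    Relation.ReflTransGen
      (fun u v => (G.deleteEdges {s(x, y)}).Adj u v ∧ ∃ i, c u = q i ∧ c v = q (i + 1))
      x y := by
  haveI : Fact (1 < r) := ⟨by omega⟩
  set D : V → V → Prop :=
    fun u v => (G.deleteEdges {s(x, y)}).Adj u v ∧ ∃ i, c u = q i ∧ c v = q (i + 1) with hD
  by_contra hxS
  set S : V → Prop := fun v => Relation.ReflTransGen D v y with hS
  have hcy : c y = q 0 := by rw [hq0]; exact (forced_eq G x y hxy hnc c).symm
  have hpat : ∀ v, S v → ∃ i, c v = q i := by
    intro v hv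
    rcases Relation.ReflTransGen.cases_head hv with rfl | ⟨w, hvw, _⟩
    · exact ⟨0, hcy⟩
    · exact ⟨_, hvw.2.choose_spec.1⟩
  set c₁ : V → Fin k := fun v => if h : S v then q (Classical.choose (hpat v h) - 1) else c v
    with hc₁
  have hval : ∀ {a b : V}, (G.deleteEdges {s(x, y)}).Adj a b → c₁ a ≠ c₁ b := by
    have key : ∀ a b : V, (G.deleteEdges {s(x, y)}).Adj a b → S a → ¬ S b → c₁ a ≠ c₁ b := by
      intro a b hab ha hb heq
      rw [hc₁] at heq
      simp only [dif_pos ha, dif_neg hb] at heq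
      have hspec : c a = q (Classical.choose (hpat a ha)) := Classical.choose_spec (hpat a ha)
      apply hb
      refine Relation.ReflTransGen.head ⟨hab.symm, ?_⟩ ha
      exact ⟨Classical.choose (hpat a ha) - 1, heq.symm, by rw [sub_add_cancel]; exact hspec⟩
    intro a b hab heq
    by_cases ha : S a <;> by_cases hb : S b
    · rw [hc₁] at heq
      simp only [dif_pos ha, dif_pos hb] at heq
      have h1 : c a = q (Classical.choose (hpat a ha)) := Classical.choose_spec (hpat a ha)
      have h2 : c b = q (Classical.choose (hpat b hb)) := Classical.choose_spec (hpat b hb)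
      have h3 := sub_left_inj.mp (hq heq)
      exact c.valid hab (by rw [h1, h2, h3])
    · exact key a b hab ha hb heq
    · exact key b a hab.symm hb ha heq.symm
    · refine c.valid hab ?_
      rw [hc₁] at heq
      simpa only [dif_neg ha, dif_neg hb] using heq
  have hxy' : c₁ x ≠ c₁ y := by
    have hxns : ¬ S x := hxS
    have hys : S y := Relation.ReflTransGen.refl
    rw [hc₁]
    simp only [dif_neg hxns, dif_pos hys]
    have hspec : c y = q (Classical.choose (hpat y hys)) := Classical.choose_spec (hpat y hys)
    have h0 : Classical.choose (hpat y hys) = 0 := hq (hspec.symm.trans hcy)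
    rw [h0, ← hq0]
    intro h
    have := hq h
    simp only [zero_sub] at this
    exact one_ne_zero (neg_injective (by simpa using this.symm) : (1 : ZMod r) = 0)
  exact hxy' (forced_eq G x y hxy hnc (Coloring.mk c₁ hval))

lemma recover_dir {k r : ℕ} [NeZero r] (hr3 : 3 ≤ r) (q q' : ZMod r → Fin k)
    (hq : Function.Injective q) (hq' : Function.Injective q')
    (h0 : q' 0 = q 0) (h1 : q' 1 = q 1)
    (hE : ∀ i : ZMod r, ∃ j : ZMod r, s(q' i, q' (i + 1)) = s(q j, q (j + 1))) :
    ∀ i, q' i = q i := by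
  have hr2 : ¬ (r ∣ 2) := by
    intro h
    have := Nat.le_of_dvd (by norm_num) h
    omega
  have key : ∀ n : ℕ, q' (n : ZMod r) = q (n : ZMod r) ∧
      q' ((n : ZMod r) + 1) = q ((n : ZMod r) + 1) := by
    intro n
    induction n with
    | zero => exact ⟨by simpa using h0, by simpa using h1⟩
    | succ n ih =>
      obtain ⟨hn, hn1⟩ := ih
      have hcast : ((n + 1 : ℕ) : ZMod r) = (n : ZMod r) + 1 := by push_cast; ring
      rw [hcast]
      refine ⟨hn1, ?_⟩
      obtain ⟨j, hj⟩ := hE ((n : ZMod r) + 1)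
      rw [Sym2.eq_iff] at hj
      rcases hj with ⟨ha, hb⟩ | ⟨ha, hb⟩
      · have hjn : j = (n : ZMod r) + 1 := hq (ha.symm.trans hn1)
        rw [hb, hjn]
      · have hjn : j + 1 = (n : ZMod r) + 1 := hq (ha.symm.trans hn1)
        have hj' : j = (n : ZMod r) := add_right_cancel hjn
        rw [hj', ← hn] at hb
        have h2 : ((n : ZMod r) + 1) + 1 = (n : ZMod r) := hq' hb
        have h20 : ((2 : ℕ) : ZMod r) = 0 := by
          push_cast
          linear_combination h2
        exact absurd ((ZMod.natCast_eq_zero_iff 2 r).mp h20) hr2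
  intro i
  have hi := (key i.val).1
  rwa [ZMod.natCast_rightInverse i] at hi

lemma pattern_recover {k r : ℕ} [NeZero r] (hr3 : 3 ≤ r) (q q' : ZMod r → Fin k)
    (hq : Function.Injective q) (hq' : Function.Injective q') (h0 : q' 0 = q 0)
    (hE : ∀ i : ZMod r, ∃ j : ZMod r, s(q' i, q' (i + 1)) = s(q j, q (j + 1))) :
    (∀ i, q' i = q i) ∨ (∀ i, q' i = q (-i)) := by
  obtain ⟨j, hj⟩ := hE 0
  rw [Sym2.eq_iff] at hj
  rcases hj with ⟨ha, hb⟩ | ⟨ha, hb⟩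
  · -- q' 0 = q j hence j = 0, q' 1 = q 1
    have hj0 : j = 0 := hq (ha.symm.trans h0)
    rw [hj0] at hb
    simp only [zero_add] at hb
    exact Or.inl (recover_dir hr3 q q' hq hq' h0 (by simpa using hb) hE)
  · -- q' 0 = q (j + 1) hence j = -1, q' 1 = q (-1)
    have hj0 : j + 1 = 0 := hq (ha.symm.trans h0)
    have hjm : j = -1 := by linear_combination hj0
    rw [hjm] at hb
    simp only [zero_add, neg_add_cancel] at hb
    right
    have hqn : Function.Injective (fun i : ZMod r => q (-i)) :=
      fun a b h => neg_injective (hq h)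
    have hE' : ∀ i : ZMod r, ∃ j : ZMod r,
        s(q' i, q' (i + 1)) = s((fun i : ZMod r => q (-i)) j, (fun i : ZMod r => q (-i)) (j + 1)) := by
      intro i
      obtain ⟨m, hm⟩ := hE i
      refine ⟨-m - 1, ?_⟩
      simp only
      rw [hm]
      rw [show -(-m - 1) = m + 1 by ring, show -(-m - 1 + 1) = m by ring]
      exact Sym2.eq_swap
    exact recover_dir hr3 (fun i : ZMod r => q (-i)) q' hqn hq'
      (by simpa using h0) (by simpa using hb) hE'

instance subgraphFinite {V : Type*} [Finite V] (G : SimpleGraph V) : Finite G.Subgraph := by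
  have : Finite (Set V × (V → V → Prop)) := by infer_instance
  refine Finite.of_injective (fun H : G.Subgraph => (H.verts, H.Adj)) ?_
  intro H1 H2 h
  rw [Prod.mk.injEq] at h
  exact SimpleGraph.Subgraph.ext h.1 h.2

lemma prod_Icc_descFactorial (k r : ℕ) (hr : 1 ≤ r) :
    (∏ i ∈ Finset.Icc 1 (r - 1), (k - i)) = (k - 1).descFactorial (r - 1) := by
  rw [Nat.descFactorial_eq_prod_range]
  refine Finset.prod_bij' (fun i _ => i - 1) (fun i _ => i + 1) ?_ ?_ ?_ ?_ ?_
  · intro a ha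
    rw [Finset.mem_Icc] at ha
    rw [Finset.mem_range]
    omega
  · intro a ha
    rw [Finset.mem_range] at ha
    rw [Finset.mem_Icc]
    omega
  · intro a ha
    rw [Finset.mem_Icc] at ha
    omega
  · intro a ha
    rw [Finset.mem_range] at ha
    omega
  · intro a ha
    rw [Finset.mem_Icc] at ha
    omega

lemma card_emb {k : ℕ} (r : ℕ) (α : Fin k) :
    Fintype.card (Fin (r - 1) ↪ {γ : Fin k // γ ≠ α}) = (k - 1).descFactorial (r - 1) := by
  rw [Fintype.card_embedding_eq, Fintype.card_fin]
  congr 1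
  rw [Fintype.card_subtype_compl, Fintype.card_subtype_eq, Fintype.card_fin]

def qfun {k r : ℕ} [NeZero r] (α : Fin k) (b : Fin (r - 1) ↪ {γ : Fin k // γ ≠ α}) :
    ZMod r → Fin k := fun i =>
  if h : i = 0 then α else
    (b ⟨i.val - 1, by
      have h1 : i.val < r := ZMod.val_lt i
      have h2 : i.val ≠ 0 := fun hh => h ((ZMod.val_eq_zero i).mp hh)
      omega⟩).1

lemma qfun_zero {k r : ℕ} [NeZero r] (α : Fin k) (b : Fin (r - 1) ↪ {γ : Fin k // γ ≠ α}) :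
    qfun α b 0 = α := by simp [qfun]

lemma qfun_inj {k r : ℕ} [NeZero r] (α : Fin k) (b : Fin (r - 1) ↪ {γ : Fin k // γ ≠ α}) :
    Function.Injective (qfun α b) := by
  intro i j h
  unfold qfun at h
  split_ifs at h with hi hj hj
  · rw [hi, hj]
  · exact absurd h.symm (b _).2
  · exact absurd h (b _).2
  · have hij := b.injective (Subtype.ext h)
    rw [Fin.mk.injEq] at hij
    have h1 : i.val < r := ZMod.val_lt i
    have h2 : i.val ≠ 0 := fun hh => hi ((ZMod.val_eq_zero i).mp hh)
    have h3 : j.val < r := ZMod.val_lt j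
    have h4 : j.val ≠ 0 := fun hh => hj ((ZMod.val_eq_zero j).mp hh)
    have : i.val = j.val := by omega
    exact ZMod.val_injective r this

lemma qfun_eval {k r : ℕ} [NeZero r] (α : Fin k) (b : Fin (r - 1) ↪ {γ : Fin k // γ ≠ α})
    (j : Fin (r - 1)) :
    qfun α b ((j.val + 1 : ℕ) : ZMod r) = (b j).1 := by
  have hlt : j.val + 1 < r := by have := j.isLt; omega
  have hval : (((j.val + 1 : ℕ) : ZMod r)).val = j.val + 1 := ZMod.val_cast_of_lt hlt
  have hne : (((j.val + 1 : ℕ) : ZMod r)) ≠ 0 := by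
    intro hh
    rw [hh, ZMod.val_zero] at hval
    omega
  unfold qfun
  rw [dif_neg hne]
  exact congrArg (fun t => ((b t : {γ : Fin k // γ ≠ α}) : Fin k)) (Fin.ext (by
      show (((j.val + 1 : ℕ) : ZMod r)).val - 1 = j.val
      rw [hval]; omega))

def sigmaFn (r : ℕ) : Fin (r - 1) → Fin (r - 1) := fun j =>
  ⟨r - 2 - j.val, by have := j.isLt; omega⟩

lemma sigma_inj (r : ℕ) : Function.Injective (sigmaFn r) := by
  intro a b h
  have ha := a.isLt
  have hb := b.isLt
  rw [sigmaFn, sigmaFn, Fin.mk.injEq] at h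
  ext
  omega

lemma qfun_neg_eval {k r : ℕ} [NeZero r] (α : Fin k) (b : Fin (r - 1) ↪ {γ : Fin k // γ ≠ α})
    (j : Fin (r - 1)) :
    qfun α b (-((j.val + 1 : ℕ) : ZMod r)) = (b (sigmaFn r j)).1 := by
  have hlt : j.val + 1 < r := by have := j.isLt; omega
  have hval : (((j.val + 1 : ℕ) : ZMod r)).val = j.val + 1 := ZMod.val_cast_of_lt hlt
  have hne : (((j.val + 1 : ℕ) : ZMod r)) ≠ 0 := by
    intro hh
    rw [hh, ZMod.val_zero] at hval
    omega
  have hnegne : -(((j.val + 1 : ℕ) : ZMod r)) ≠ 0 := fun hh => hne (neg_eq_zero.mp hh)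
  have hnegval : (-(((j.val + 1 : ℕ) : ZMod r))).val = r - (j.val + 1) := by
    rw [ZMod.neg_val, if_neg hne, hval]
  unfold qfun
  rw [dif_neg hnegne]
  refine congrArg (fun t => ((b t : {γ : Fin k // γ ≠ α}) : Fin k)) (Fin.ext ?_)
  have := j.isLt
  simp only [hnegval, sigmaFn]
  omega

lemma core_cycle {k r : ℕ} (hr3 : 3 ≤ r) (G : SimpleGraph V) (x y : V) (hxy : G.Adj x y)
    (hnc : ¬ G.Colorable k) (c : (G.deleteEdges {s(x, y)}).Coloring (Fin k))
    (q : ZMod r → Fin k) (hq : Function.Injective q) (hq0 : q 0 = c x) :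
    ∃ H ∈ modCycles (G.deleteEdges {s(x, y)}) r 0,
      (∀ u v, H.Adj u v → ∃ i, (c u = q i ∧ c v = q (i + 1)) ∨ (c v = q i ∧ c u = q (i + 1))) ∧
      (∀ i : ZMod r, ∃ u v, H.Adj u v ∧ c u = q i ∧ c v = q (i + 1)) := by
  haveI : NeZero r := ⟨by omega⟩
  set D : V → V → Prop :=
    fun u v => (G.deleteEdges {s(x, y)}).Adj u v ∧ ∃ i, c u = q i ∧ c v = q (i + 1) with hD
  have hDadj : ∀ a b, D a b → (G.deleteEdges {s(x, y)}).Adj a b := fun _ _ h => h.1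
  have hDstep : ∀ a b, D a b → ∃ i, c a = q i ∧ c b = q (i + 1) := fun _ _ h => h.2
  -- x reaches y
  have h1 : Relation.ReflTransGen D x y := reach_of_pattern hr3 G x y hxy hnc c q hq hq0
  -- y reaches x, via the reversed pattern
  have h2 : Relation.ReflTransGen D y x := by
    have hq' : Function.Injective (fun i : ZMod r => q (-i)) :=
      fun a b h => neg_injective (hq h)
    have h2' := reach_of_pattern hr3 G x y hxy hnc c (fun i => q (-i)) hq'
      (show q (-(0 : ZMod r)) = c x by simpa using hq0)
    rw [← Relation.reflTransGen_swap]
    refine Relation.ReflTransGen.mono ?_ _ _ h2'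
    rintro u v ⟨hadj, i, hu, hv⟩
    refine ⟨hadj.symm, -(i + 1), hv, ?_⟩
    simpa using hu
  obtain ⟨l₁, hc₁, hl₁⟩ := List.exists_isChain_cons_of_relationReflTransGen h1
  obtain ⟨l₂, hc₂, hl₂⟩ := List.exists_isChain_cons_of_relationReflTransGen h2
  have hxny : x ≠ y := hxy.ne
  have hl₁ne : l₁ ≠ [] := by rintro rfl; exact hxny (by simpa using hl₁)
  have hl₂ne : l₂ ≠ [] := by
    rintro rfl
    have hyx : y = x := by simpa using hl₂
    exact hxny hyx.symm
  have hgl₁ : l₁.getLast hl₁ne = y := by rwa [List.getLast_cons hl₁ne] at hl₁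
  have hgl₂ : l₂.getLast hl₂ne = x := by rwa [List.getLast_cons hl₂ne] at hl₂
  -- closed chain at x
  have hchain : List.Chain D x (l₁ ++ l₂) := by
    have hdec : l₁ = l₁.dropLast ++ [y] := by
      conv_lhs => rw [← List.dropLast_append_getLast hl₁ne, hgl₁]
    rw [hdec, List.append_assoc, List.singleton_append]
    show List.IsChain D (x :: _)
    rw [List.isChain_cons_split]
    constructor
    · rw [← hdec]; exact hc₁
    · exact hc₂
  have hlast : (l₁ ++ l₂).getLast? = some x := by
    rw [List.getLast?_append_of_ne_nil _ hl₂ne, List.getLast?_eq_getLast hl₂ne, hgl₂]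
  obtain ⟨u', l', hl'ne, hc', hl'last, hnd⟩ :=
    closed_chain_simple D (l₁ ++ l₂).length x (l₁ ++ l₂) le_rfl
      (by simp [hl₁ne]) hchain hlast
  have hgl' : l'.getLast hl'ne = u' := by
    rw [List.getLast?_eq_getLast hl'ne] at hl'last
    exact Option.some_injective _ hl'last
  -- pattern phase of u'
  obtain ⟨a₀, t, rfl⟩ : ∃ a₀ t, l' = a₀ :: t := by
    cases l' with
    | nil => exact absurd rfl hl'ne
    | cons a t => exact ⟨a, t, rfl⟩
  have hc' : List.IsChain D (u' :: a₀ :: t) := hc'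
  rw [List.chain_cons] at hc'
  obtain ⟨hDu'a, hct⟩ := hc'
  obtain ⟨i₀, hcu', _⟩ := hDstep _ _ hDu'a
  -- phases along the closed chain
  have hph := chain_phases D q c hDstep hq (a₀ :: t) u' i₀ (List.chain_cons.mpr ⟨hDu'a, hct⟩) hcu'
  have hLlast : (u' :: a₀ :: t)[(a₀ :: t).length]'(by simp) = u' :=
    (cons_getElem_length (a₀ :: t) hl'ne u').trans hgl'
  -- r divides the length
  have hdvd : r ∣ (a₀ :: t).length := by
    have := hph (a₀ :: t).length (by simp)
    rw [hLlast, hcu'] at this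
    have h0 : (((a₀ :: t).length : ℕ) : ZMod r) = 0 := left_eq_add.mp (hq this)
    exact (ZMod.natCast_eq_zero_iff _ _).mp h0
  have hlen3 : 3 ≤ (a₀ :: t).length :=
    le_trans hr3 (Nat.le_of_dvd (by simp) hdvd)
  -- build the walk
  have hgt : (a₀ :: t).getLast (List.cons_ne_nil _ _) = u' := hgl'
  obtain ⟨w₂, hs₂, he₂, hidx₂⟩ :=
    walk_of_chain (G.deleteEdges {s(x, y)}) D hDadj t a₀ u' hct hgt
  set w : (G.deleteEdges {s(x, y)}).Walk u' u' := Walk.cons (hDadj u' a₀ hDu'a) w₂ with hw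
  have hndl' : (a₀ :: t).Nodup := by
    have hform : a₀ :: t = (a₀ :: t).dropLast ++ [u'] := by
      conv_lhs => rw [← List.dropLast_append_getLast hl'ne, hgl']
    rw [hform, List.nodup_append_comm]
    simpa using hnd
  have hpath₂ : w₂.IsPath := by rw [Walk.isPath_def, hs₂]; exact hndl'
  have hlen₂ : w₂.length + 1 = (a₀ :: t).length := by
    have hls := congrArg List.length hs₂
    rwa [Walk.length_support] at hls
  have hrlen : r ≤ (a₀ :: t).length := Nat.le_of_dvd (by simp) hdvd
  have hne2 : s(u', a₀) ∉ w₂.edges := by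
    intro hmem
    have h1 := edge_loop_length_one w₂ (by rw [hs₂]; exact hndl') hmem
    omega
  have hcyc : w.IsCycle := (Walk.cons_isCycle_iff w₂ (hDadj u' a₀ hDu'a)).mpr ⟨hpath₂, hne2⟩
  have hwe : ∀ e ∈ w.edges, ∃ a b, e = s(a, b) ∧ D a b := by
    intro e hee
    rw [hw, Walk.edges_cons, List.mem_cons] at hee
    rcases hee with rfl | hee
    · exact ⟨u', a₀, rfl, hDu'a⟩
    · exact he₂ e hee
  have hwidx : ∀ n (h : n + 1 < (u' :: a₀ :: t).length),
      s((u' :: a₀ :: t)[n]'(by omega), (u' :: a₀ :: t)[n + 1]'h) ∈ w.edges := by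
    intro n h
    cases n with
    | zero => simp [hw, Walk.edges_cons]
    | succ m =>
      have h' : m + 1 < (a₀ :: t).length := by simpa using h
      have hmm := hidx₂ m h'
      simp only [List.getElem_cons_succ]
      rw [hw, Walk.edges_cons]
      exact List.mem_cons_of_mem _ hmm
  have hsupp : w.support = u' :: a₀ :: t := by rw [hw, Walk.support_cons, hs₂]
  set H : (G.deleteEdges {s(x, y)}).Subgraph :=
    { verts := {v | v ∈ w.support}
      Adj := fun a b => s(a, b) ∈ w.edges
      adj_sub := fun {a b} h => (SimpleGraph.mem_edgeSet _).mp (w.edges_subset_edgeSet h)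
      edge_vert := fun {a b} h => w.fst_mem_support_of_mem_edges h
      symm := ⟨fun a b h => by
        have h' : s(a, b) ∈ w.edges := h
        show s(b, a) ∈ w.edges
        rw [show s(b, a) = s(a, b) from Sym2.eq_swap]
        exact h'⟩ } with hH
  have hHedge : H.edgeSet = {e | e ∈ w.edges} := by
    ext e
    induction e with
    | _ a b =>
      rw [Subgraph.mem_edgeSet]
      exact Iff.rfl
  have hedn : w.edges.Nodup := hcyc.edges_nodup
  have hcard : H.edgeSet.ncard = w.length := by
    have h1 : {e | e ∈ w.edges} = ↑w.edges.toFinset := by ext e; simp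
    rw [hHedge, h1, Set.ncard_coe_finset, List.toFinset_card_of_nodup hedn, Walk.length_edges]
  have hwlen : w.length = (a₀ :: t).length := by
    have hls := congrArg List.length hsupp
    rw [Walk.length_support] at hls
    simp only [List.length_cons] at hls ⊢
    omega
  have hadjH : ∀ u v : V, H.Adj u v ↔ s(u, v) ∈ w.edges := fun u v => Iff.rfl
  refine ⟨H, ⟨⟨u', w, hcyc, rfl, hHedge⟩, ?_⟩, ?_, ?_⟩
  · rw [hcard, hwlen]
    exact Nat.mod_eq_zero_of_dvd hdvd
  · intro u v huv
    obtain ⟨a, b, heq, hDab⟩ := hwe _ ((hadjH u v).mp huv)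
    obtain ⟨i, hca, hcb⟩ := hDstep _ _ hDab
    rw [Sym2.eq_iff] at heq
    rcases heq with ⟨rfl, rfl⟩ | ⟨rfl, rfl⟩
    · exact ⟨i, Or.inl ⟨hca, hcb⟩⟩
    · exact ⟨i, Or.inr ⟨hca, hcb⟩⟩
  · intro i
    have hnr : (i - i₀).val < r := ZMod.val_lt _
    have hrlen' : r ≤ t.length + 1 := by simpa using hrlen
    have hlen' : (i - i₀).val + 1 < (u' :: a₀ :: t).length := by
      simp only [List.length_cons]
      omega
    have hlen'' : (i - i₀).val < (u' :: a₀ :: t).length := by omega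
    have hcast : (((i - i₀).val : ℕ) : ZMod r) = i - i₀ := ZMod.natCast_rightInverse _
    refine ⟨(u' :: a₀ :: t)[(i - i₀).val]'hlen'',
      (u' :: a₀ :: t)[(i - i₀).val + 1]'hlen', hwidx _ hlen', ?_, ?_⟩
    · rw [hph _ hlen'']
      congr 1
      rw [hcast]
      ring
    · rw [hph _ hlen']
      congr 1
      push_cast
      rw [hcast]
      ring


end auxiliary

/-- If `χ(G) = k+1`, `χ(G - e) = k` and `3 ≤ r ≤ k`, then `G - e` contains at least
`(1/2)·∏_{i=1}^{r-1}(k-i)` cycles of length `0 mod r`. -/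
theorem stmt1 {V : Type*} [Fintype V] (G : SimpleGraph V) (k r : ℕ)
    (hr : 3 ≤ r) (hrk : r ≤ k) (e : Sym2 V) (x : V)
    (he : e ∈ G.edgeSet) (hx : x ∈ e)
    (hχ : G.chromaticNumber = (k : ℕ∞) + 1)
    (hχe : (G.deleteEdges {e}).chromaticNumber = (k : ℕ∞)) :
    (∏ i ∈ Finset.Icc 1 (r - 1), (k - i)) / 2 ≤
      (modCycles (G.deleteEdges {e}) r 0).ncard := by
  haveI : NeZero r := ⟨by omega⟩
  haveI : Finite ((G.deleteEdges {e}).Subgraph) := subgraphFinite _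
  obtain ⟨y, rfl⟩ := Sym2.mem_iff_exists.mp hx
  have hxy : G.Adj x y := (SimpleGraph.mem_edgeSet _).mp he
  have hnc : ¬ G.Colorable k := by
    intro hcol
    have h1 : G.chromaticNumber ≤ (k : ℕ∞) := chromaticNumber_le_iff_colorable.mpr hcol
    rw [hχ] at h1
    have h2 : ((k + 1 : ℕ) : ℕ∞) ≤ ((k : ℕ) : ℕ∞) := by push_cast; exact h1
    have h3 := Nat.cast_le.mp h2
    omega
  have hcol' : (G.deleteEdges {s(x, y)}).Colorable k :=
    chromaticNumber_le_iff_colorable.mp (le_of_eq hχe)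
  obtain ⟨c⟩ := hcol'
  set α := c x with hα
  have hex : ∀ b : Fin (r - 1) ↪ {γ : Fin k // γ ≠ α},
      ∃ H : (G.deleteEdges {s(x, y)}).Subgraph,
      H ∈ modCycles (G.deleteEdges {s(x, y)}) r 0 ∧
      (∀ u v, H.Adj u v → ∃ i, (c u = qfun α b i ∧ c v = qfun α b (i + 1)) ∨
        (c v = qfun α b i ∧ c u = qfun α b (i + 1))) ∧
      (∀ i : ZMod r, ∃ u v, H.Adj u v ∧ c u = qfun α b i ∧ c v = qfun α b (i + 1)) := by
    intro b
    obtain ⟨H, hmem, hQ1, hQ2⟩ :=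
      core_cycle hr G x y hxy hnc c (qfun α b) (qfun_inj α b) (qfun_zero α b)
    exact ⟨H, hmem, hQ1, hQ2⟩
  set f : (Fin (r - 1) ↪ {γ : Fin k // γ ≠ α}) → (G.deleteEdges {s(x, y)}).Subgraph :=
    fun b => Classical.choose (hex b) with hf
  have hfspec : ∀ b, (Classical.choose (hex b)) ∈ modCycles (G.deleteEdges {s(x, y)}) r 0 ∧ _ ∧ _ :=
    fun b => Classical.choose_spec (hex b)
  -- the reversal map on embeddings
  set gσ : (Fin (r - 1) ↪ {γ : Fin k // γ ≠ α}) → (Fin (r - 1) ↪ {γ : Fin k // γ ≠ α}) :=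
    fun b => ⟨fun j => b (sigmaFn r j), fun a a' hh => sigma_inj r (b.injective hh)⟩ with hgσ
  have hfib : ∀ H ∈ Finset.univ.image f,
      (Finset.univ.filter (fun b => f b = H)).card ≤ 2 := by
    intro H hH
    rw [Finset.mem_image] at hH
    obtain ⟨b₀, -, hb₀⟩ := hH
    have hsub : Finset.univ.filter (fun b => f b = H) ⊆ {b₀, gσ b₀} := by
      intro b' hb'
      rw [Finset.mem_filter] at hb'
      have hfb' : f b' = H := hb'.2
      have hQ1₀ := (hfspec b₀).2.1
      have hQ2' := (hfspec b').2.2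
      rw [show Classical.choose (hex b₀) = H from hb₀] at hQ1₀
      rw [show Classical.choose (hex b') = H from hfb'] at hQ2'
      have hE : ∀ i : ZMod r, ∃ j : ZMod r,
          s(qfun α b' i, qfun α b' (i + 1)) = s(qfun α b₀ j, qfun α b₀ (j + 1)) := by
        intro i
        obtain ⟨u, v, hadj, hcu, hcv⟩ := hQ2' i
        obtain ⟨j, hj⟩ := hQ1₀ u v hadj
        rcases hj with ⟨h1, h2⟩ | ⟨h1, h2⟩
        · exact ⟨j, by rw [← hcu, ← hcv, h1, h2]⟩
        · refine ⟨j, ?_⟩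
          rw [← hcu, ← hcv, h2, h1]
          exact Sym2.eq_swap
      have h0 : qfun α b' 0 = qfun α b₀ 0 := by rw [qfun_zero, qfun_zero]
      rcases pattern_recover (by omega) (qfun α b₀) (qfun α b')
        (qfun_inj α b₀) (qfun_inj α b') h0 hE with hsame | hneg
      · have hbb : b' = b₀ := by
          refine DFunLike.ext _ _ (fun j => Subtype.ext ?_)
          have h1 := hsame ((j.val + 1 : ℕ) : ZMod r)
          rwa [qfun_eval, qfun_eval] at h1
        simp [hbb]
      · have hbb : b' = gσ b₀ := by
          refine DFunLike.ext _ _ (fun j => Subtype.ext ?_)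
          have h1 := hneg ((j.val + 1 : ℕ) : ZMod r)
          rw [qfun_eval, qfun_neg_eval] at h1
          exact h1
        simp [hbb]
    calc (Finset.univ.filter (fun b => f b = H)).card
        ≤ ({b₀, gσ b₀} : Finset _).card := Finset.card_le_card hsub
      _ ≤ 2 := Finset.card_le_two
  have hcount := Finset.card_le_mul_card_image (s := (Finset.univ : Finset _)) (f := f) 2 hfib
  rw [Finset.card_univ, card_emb r α] at hcount
  have himg : ((Finset.univ.image f : Finset _) : Set _) ⊆
      modCycles (G.deleteEdges {s(x, y)}) r 0 := by
    intro H hH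
    rw [Finset.coe_image] at hH
    obtain ⟨b, -, rfl⟩ := hH
    exact (hfspec b).1
  have hle : (Finset.univ.image f).card ≤ (modCycles (G.deleteEdges {s(x, y)}) r 0).ncard := by
    rw [← Set.ncard_coe_finset]
    exact Set.ncard_le_ncard himg (Set.toFinite _)
  rw [prod_Icc_descFactorial k r (by omega)]
  calc (k - 1).descFactorial (r - 1) / 2
      ≤ (2 * (Finset.univ.image f).card) / 2 := Nat.div_le_div_right hcount
    _ = (Finset.univ.image f).card := by omega
    _ ≤ _ := hle
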